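/- Let ρ be a density matrix on ℂ^d with spectral decomposition ρ = Σ_{x ∈ Fin d} p_x |x⟩⟨x| and von Neumann entropy S(ρ) = −Σ_x p_x log₂ p_x. For every ε > 0 and δ > 0 there exists N₀ ∈ ℕ such that for every N ≥ N₀ the dimension of the typical subspace, dim 𝖥_{N,ε} = Tr[P_{N,ε}] = |T_{N,ε}|, satisfies (1 − δ)·2^{N(S(ρ)−ε)} ≤ |T_{N,ε}| ≤ 2^{N(S(ρ)+ε)}. -/

import Mathlib

open Matrix
open scoped ComplexOrder

noncomputable section

/-- The `ε`-typical set of length-`N` sequences for eigenvalues `p` and entropy `S`: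
sequences with `2^{−N(S+ε)} ≤ Π_k p_{x_k} ≤ 2^{−N(S−ε)}`. -/
def typicalSet {ι : Type*} [Fintype ι] (p : ι → ℝ) (S : ℝ) (N : ℕ) (ε : ℝ) :
    Finset (Fin N → ι) :=
  Finset.univ.filter fun xs =>
    (2 : ℝ) ^ (-(N : ℝ) * (S + ε)) ≤ ∏ k, p (xs k) ∧
      ∏ k, p (xs k) ≤ (2 : ℝ) ^ (-(N : ℝ) * (S - ε))

/-- Factorize a sum of products over tuples. -/
lemma sum_prod_pi {N d : ℕ} (h : Fin N → Fin d → ℝ) :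
    ∑ xs : Fin N → Fin d, ∏ k, h k (xs k) = ∏ k, ∑ x, h k x :=
  (Fintype.prod_sum h).symm

/-- Second moment identity for i.i.d. sums. -/
lemma second_moment {d : ℕ} (p g : Fin d → ℝ) (hsum : ∑ x, p x = 1)
    (hmean : ∑ x, p x * g x = 0) (N : ℕ) :
    ∑ xs : Fin N → Fin d, (∏ k, p (xs k)) * (∑ k, g (xs k)) ^ 2
      = N * ∑ x, p x * g x ^ 2 := by
  have key : ∀ k l : Fin N,
      (∑ xs : Fin N → Fin d, (∏ m, p (xs m)) * (g (xs k) * g (xs l)))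
        = if k = l then ∑ x, p x * g x ^ 2 else 0 := by
    intro k l
    have hfac : ∀ xs : Fin N → Fin d,
        (∏ m, p (xs m)) * (g (xs k) * g (xs l))
          = ∏ m, (p (xs m) * (if m = k then g (xs m) else 1)
              * (if m = l then g (xs m) else 1)) := by
      intro xs
      rw [Finset.prod_mul_distrib, Finset.prod_mul_distrib,
        Finset.prod_ite_eq' Finset.univ k (fun m => g (xs m)),
        Finset.prod_ite_eq' Finset.univ l (fun m => g (xs m))]
      simp [mul_assoc]
    simp_rw [hfac]
    rw [sum_prod_pi (fun m x => p x * (if m = k then g x else 1)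
              * (if m = l then g x else 1))]
    by_cases hkl : k = l
    · subst hkl
      simp only [if_pos rfl]
      rw [Finset.prod_eq_single k]
      · simp [pow_two, mul_assoc]
      · intro m _ hm
        simp [hm, hsum]
      · simp
    · rw [if_neg hkl]
      apply Finset.prod_eq_zero (Finset.mem_univ k)
      simp only [if_pos rfl, if_neg hkl]
      simpa using hmean
  calc ∑ xs : Fin N → Fin d, (∏ k, p (xs k)) * (∑ k, g (xs k)) ^ 2
      = ∑ xs : Fin N → Fin d, ∑ k, ∑ l, (∏ m, p (xs m)) * (g (xs k) * g (xs l)) := by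
        refine Finset.sum_congr rfl fun xs _ => ?_
        rw [pow_two, Finset.sum_mul_sum]
        rw [Finset.mul_sum]
        exact Finset.sum_congr rfl fun k _ => by rw [Finset.mul_sum]
    _ = ∑ k, ∑ l, ∑ xs : Fin N → Fin d, (∏ m, p (xs m)) * (g (xs k) * g (xs l)) := by
        rw [Finset.sum_comm]
        exact Finset.sum_congr rfl fun k _ => Finset.sum_comm
    _ = ∑ k : Fin N, ∑ l : Fin N, if k = l then ∑ x, p x * g x ^ 2 else 0 := by
        simp_rw [key]
    _ = N * ∑ x, p x * g x ^ 2 := by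
        simp [Finset.sum_ite_eq, Finset.card_univ]

/-- The classical asymptotic equipartition bounds for a probability vector. -/
lemma aep_bounds {d : ℕ} (p : Fin d → ℝ) (hp0 : ∀ x, 0 ≤ p x) (hsum : ∑ x, p x = 1)
    (S : ℝ) (hS : S = -∑ x, p x * Real.logb 2 (p x))
    (ε δ : ℝ) (hε : 0 < ε) (hδ : 0 < δ) :
    ∃ N₀ : ℕ, ∀ N ≥ N₀,
      (1 - δ) * (2 : ℝ) ^ ((N : ℝ) * (S - ε)) ≤ ((typicalSet p S N ε).card : ℝ) ∧
        ((typicalSet p S N ε).card : ℝ) ≤ (2 : ℝ) ^ ((N : ℝ) * (S + ε)) := by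
  classical
  set g : Fin d → ℝ := fun x => -Real.logb 2 (p x) - S with hg
  have hmean : ∑ x, p x * g x = 0 := by
    simp only [hg, mul_sub, mul_neg, Finset.sum_sub_distrib]
    rw [← Finset.sum_mul, hsum, one_mul, hS]
    simp
  set V : ℝ := ∑ x, p x * g x ^ 2 with hV
  have hV0 : 0 ≤ V := Finset.sum_nonneg fun x _ => mul_nonneg (hp0 x) (sq_nonneg _)
  refine ⟨⌈V / (δ * ε ^ 2)⌉₊ + 1, fun N hN => ?_⟩
  have hN1 : 1 ≤ N := le_trans (Nat.le_add_left 1 _) hN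
  have hNpos : (0 : ℝ) < N := by exact_mod_cast hN1
  have hNV : V ≤ (N : ℝ) * (δ * ε ^ 2) := by
    have h1 : V / (δ * ε ^ 2) ≤ (⌈V / (δ * ε ^ 2)⌉₊ : ℝ) := Nat.le_ceil _
    have h2 : ((⌈V / (δ * ε ^ 2)⌉₊ : ℕ) : ℝ) ≤ (N : ℝ) := by
      exact_mod_cast le_trans (Nat.le_succ _) hN
    have hde : 0 < δ * ε ^ 2 := mul_pos hδ (pow_pos hε 2)
    rw [div_le_iff₀ hde] at h1
    nlinarith
  set w : (Fin N → Fin d) → ℝ := fun xs => ∏ k, p (xs k) with hw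
  have hw0 : ∀ xs, 0 ≤ w xs := fun xs => Finset.prod_nonneg fun k _ => hp0 _
  have hsumw : ∑ xs : Fin N → Fin d, w xs = 1 := by
    rw [hw]
    rw [sum_prod_pi (fun _ x => p x)]
    simp [hsum]
  set T := typicalSet p S N ε with hT
  have hmemT : ∀ xs, xs ∈ T ↔
      ((2 : ℝ) ^ (-(N : ℝ) * (S + ε)) ≤ w xs ∧ w xs ≤ (2 : ℝ) ^ (-(N : ℝ) * (S - ε))) := by
    intro xs
    simp [hT, typicalSet, hw]
  have hPT_le : ∑ xs ∈ T, w xs ≤ 1 := by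
    rw [← hsumw]
    exact Finset.sum_le_sum_of_subset_of_nonneg (Finset.subset_univ _) fun xs _ _ => hw0 xs
  have hp2 : (0 : ℝ) < (2 : ℝ) ^ ((N : ℝ) * (S + ε)) := Real.rpow_pos_of_pos two_pos _
  have hm2 : (0 : ℝ) < (2 : ℝ) ^ ((N : ℝ) * (S - ε)) := Real.rpow_pos_of_pos two_pos _
  constructor
  · -- lower bound
    have hkey : ∀ xs, xs ∉ T → w xs * ((N : ℝ) * ε) ^ 2 ≤ w xs * (∑ k, g (xs k)) ^ 2 := by
      intro xs hxs
      rcases (hw0 xs).eq_or_lt with h0 | hpos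
      · rw [← h0]; simp
      · have hpk : ∀ k, 0 < p (xs k) := by
          intro k
          rcases (hp0 (xs k)).lt_or_eq with h | h
          · exact h
          · exfalso
            have : w xs = 0 := Finset.prod_eq_zero (Finset.mem_univ k) h.symm
            rw [this] at hpos; exact lt_irrefl _ hpos
        have hlog : Real.logb 2 (w xs) = ∑ k, Real.logb 2 (p (xs k)) :=
          Real.logb_prod _ _ fun k _ => (hpk k).ne'
        have hgsum : ∑ k, g (xs k) = -Real.logb 2 (w xs) - (N : ℝ) * S := by
          simp only [hg, Finset.sum_sub_distrib, Finset.sum_neg_distrib, hlog,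
            Finset.sum_const, Finset.card_univ, Fintype.card_fin, nsmul_eq_mul]
        have habs : (N : ℝ) * ε ≤ |∑ k, g (xs k)| := by
          rw [hmemT] at hxs
          push_neg at hxs
          by_cases hA : (2 : ℝ) ^ (-(N : ℝ) * (S + ε)) ≤ w xs
          · have hB := hxs hA
            have hlt : -(N : ℝ) * (S - ε) < Real.logb 2 (w xs) := by
              have := (Real.logb_lt_logb_iff (b := 2) (by norm_num)
                (Real.rpow_pos_of_pos two_pos (-(N : ℝ) * (S - ε))) hpos).mpr hB
              rwa [Real.logb_rpow (by norm_num) (by norm_num)] at this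
            refine le_abs.mpr (Or.inr ?_)
            rw [hgsum]; nlinarith
          · push_neg at hA
            have hlt : Real.logb 2 (w xs) < -(N : ℝ) * (S + ε) := by
              have := (Real.logb_lt_logb_iff (b := 2) (by norm_num) hpos
                (Real.rpow_pos_of_pos two_pos (-(N : ℝ) * (S + ε)))).mpr hA
              rwa [Real.logb_rpow (by norm_num) (by norm_num)] at this
            refine le_abs.mpr (Or.inl ?_)
            rw [hgsum]; nlinarith
        have hsq : ((N : ℝ) * ε) ^ 2 ≤ (∑ k, g (xs k)) ^ 2 := by
          rw [← sq_abs (∑ k, g (xs k))]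
          exact pow_le_pow_left₀ (by positivity) habs 2
        exact mul_le_mul_of_nonneg_left hsq (hw0 xs)
    have hcomp : ∑ xs ∈ Tᶜ, w xs ≤ δ := by
      have hNe : (0 : ℝ) < ((N : ℝ) * ε) ^ 2 := pow_pos (mul_pos hNpos hε) 2
      have h1 : (∑ xs ∈ Tᶜ, w xs) * ((N : ℝ) * ε) ^ 2 ≤ (N : ℝ) * V := by
        calc (∑ xs ∈ Tᶜ, w xs) * ((N : ℝ) * ε) ^ 2
            = ∑ xs ∈ Tᶜ, w xs * ((N : ℝ) * ε) ^ 2 := by rw [Finset.sum_mul]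
          _ ≤ ∑ xs ∈ Tᶜ, w xs * (∑ k, g (xs k)) ^ 2 :=
              Finset.sum_le_sum fun xs hxs => hkey xs (Finset.mem_compl.mp hxs)
          _ ≤ ∑ xs : Fin N → Fin d, w xs * (∑ k, g (xs k)) ^ 2 :=
              Finset.sum_le_sum_of_subset_of_nonneg (Finset.subset_univ _)
                fun xs _ _ => mul_nonneg (hw0 xs) (sq_nonneg _)
          _ = (N : ℝ) * V := second_moment p g hsum hmean N
      nlinarith
    have hPT_ge : 1 - δ ≤ ∑ xs ∈ T, w xs := by
      have hsplit := Finset.sum_add_sum_compl T w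
      rw [hsumw] at hsplit
      linarith
    have h1 : ∑ xs ∈ T, w xs ≤ (T.card : ℝ) * (2 : ℝ) ^ (-(N : ℝ) * (S - ε)) := by
      calc ∑ xs ∈ T, w xs ≤ ∑ _xs ∈ T, (2 : ℝ) ^ (-(N : ℝ) * (S - ε)) :=
            Finset.sum_le_sum fun xs hxs => ((hmemT xs).mp hxs).2
        _ = (T.card : ℝ) * (2 : ℝ) ^ (-(N : ℝ) * (S - ε)) := by
            rw [Finset.sum_const, nsmul_eq_mul]
    rw [neg_mul, Real.rpow_neg (by norm_num)] at h1
    have h2 := mul_le_mul_of_nonneg_right (le_trans hPT_ge h1) hm2.le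
    rwa [mul_assoc, inv_mul_cancel₀ hm2.ne', mul_one] at h2
  · -- upper bound
    have h1 : (T.card : ℝ) * (2 : ℝ) ^ (-(N : ℝ) * (S + ε)) ≤ ∑ xs ∈ T, w xs := by
      calc (T.card : ℝ) * (2 : ℝ) ^ (-(N : ℝ) * (S + ε))
          = ∑ _xs ∈ T, (2 : ℝ) ^ (-(N : ℝ) * (S + ε)) := by
            rw [Finset.sum_const, nsmul_eq_mul]
        _ ≤ ∑ xs ∈ T, w xs := Finset.sum_le_sum fun xs hxs => ((hmemT xs).mp hxs).1
    rw [neg_mul, Real.rpow_neg (by norm_num)] at h1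
    have h2 := mul_le_mul_of_nonneg_right (le_trans h1 hPT_le) hp2.le
    rwa [mul_assoc, inv_mul_cancel₀ hp2.ne', mul_one, one_mul] at h2

/-- From the spectral decomposition of a density matrix, the eigenvalues form a
probability vector. -/
lemma matrix_eigen_facts {d : ℕ} (ρ : Matrix (Fin d) (Fin d) ℂ)
    (hρ : ρ.PosSemidef) (htr : ρ.trace = 1)
    (p : Fin d → ℝ) (v : Fin d → (Fin d → ℂ))
    (honb : ∀ x y, star (v x) ⬝ᵥ v y = if x = y then 1 else 0)
    (hspec : ρ = ∑ x, (p x : ℂ) • Matrix.vecMulVec (v x) (star (v x))) :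
    (∀ x, 0 ≤ p x) ∧ ∑ x, p x = 1 := by
  have hdot : ∀ x, star (v x) ⬝ᵥ ρ *ᵥ v x = (p x : ℂ) := by
    intro x
    rw [hspec]
    have h1 : (∑ y, (p y : ℂ) • Matrix.vecMulVec (v y) (star (v y))) *ᵥ v x
        = ∑ y, (p y : ℂ) • (Matrix.vecMulVec (v y) (star (v y)) *ᵥ v x) := by
      ext i
      simp only [Matrix.mulVec, dotProduct, Finset.sum_apply, Matrix.sum_apply,
        Matrix.smul_apply, smul_eq_mul, Finset.sum_mul, Finset.mul_sum, Pi.smul_apply]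
      rw [Finset.sum_comm]
      exact Finset.sum_congr rfl fun j _ => Finset.sum_congr rfl fun y _ => by ring
    rw [h1]
    have h2 : ∀ y, Matrix.vecMulVec (v y) (star (v y)) *ᵥ v x
        = (star (v y) ⬝ᵥ v x) • v y := by
      intro y
      ext i
      simp only [Matrix.mulVec, dotProduct, Matrix.vecMulVec_apply, Pi.smul_apply,
        smul_eq_mul, Finset.mul_sum]
      rw [Finset.sum_mul]
      exact Finset.sum_congr rfl fun j _ => by ring
    simp_rw [h2, honb]
    have h3 : ∑ y, (p y : ℂ) • ((if y = x then (1 : ℂ) else 0) • v y)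
        = (p x : ℂ) • v x := by
      rw [Finset.sum_eq_single x]
      · simp
      · intro y _ hy
        simp [hy]
      · simp
    rw [h3, dotProduct_smul, honb, if_pos rfl, smul_eq_mul, mul_one]
  constructor
  · intro x
    have h0 := hρ.dotProduct_mulVec_nonneg (v x)
    rw [hdot x] at h0
    exact Complex.zero_le_real.mp h0
  · have htrace : ρ.trace = ∑ x, (p x : ℂ) := by
      rw [hspec, Matrix.trace_sum]
      refine Finset.sum_congr rfl fun x _ => ?_
      rw [Matrix.trace_smul, smul_eq_mul]
      have : (Matrix.vecMulVec (v x) (star (v x))).trace = star (v x) ⬝ᵥ v x := by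
        simp [Matrix.trace, Matrix.diag, Matrix.vecMulVec_apply, dotProduct,
          mul_comm]
      rw [this, honb, if_pos rfl, mul_one]
    rw [htrace] at htr
    have : ((∑ x, p x : ℝ) : ℂ) = 1 := by push_cast; exact htr
    exact_mod_cast this

/-- Bounds on the dimension of the typical subspace (the cardinality of the typical set):
`(1 − δ)·2^{N(S−ε)} ≤ |T_{N,ε}| ≤ 2^{N(S+ε)}` for all sufficiently large `N`. -/
theorem typical_subspace_dimension_bounds (d : ℕ)
    (ρ : Matrix (Fin d) (Fin d) ℂ) (hρ : ρ.PosSemidef) (htr : ρ.trace = 1)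
    (p : Fin d → ℝ) (v : Fin d → (Fin d → ℂ))
    (honb : ∀ x y, star (v x) ⬝ᵥ v y = if x = y then 1 else 0)
    (hspec : ρ = ∑ x, (p x : ℂ) • Matrix.vecMulVec (v x) (star (v x)))
    (S : ℝ) (hS : S = -∑ x, p x * Real.logb 2 (p x))
    (ε δ : ℝ) (hε : 0 < ε) (hδ : 0 < δ) :
    ∃ N₀ : ℕ, ∀ N ≥ N₀,
      (1 - δ) * (2 : ℝ) ^ ((N : ℝ) * (S - ε)) ≤ ((typicalSet p S N ε).card : ℝ) ∧
        ((typicalSet p S N ε).card : ℝ) ≤ (2 : ℝ) ^ ((N : ℝ) * (S + ε)) := by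
  obtain ⟨hp0, hsum⟩ := matrix_eigen_facts ρ hρ htr p v honb hspec
  exact aep_bounds p hp0 hsum S hS ε δ hε hδ
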